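/- arXiv:2512.23468 — 2 statements merged into one kernel-verified Lean document; each statement's English description precedes it below -/
import Mathlib

section
/- For a graph containing the star at s with stitched weights [w, w_s], if S₁ and S₂ are two distinct global minimum cut-sets both containing s (minimizing [w,w_s](cut(S)) over all nonempty proper S ⊆ V), then their complements are disjoint: (V ∖ S₁) ∩ (V ∖ S₂) = ∅. -/
open Finset
open scoped Classical

/-- The weight of the cut induced by `S`. -/
noncomputable def cutWeight {V : Type*} (E : Finset (Sym2 V)) (w : Sym2 V → ℕ)
    (S : Finset V) : ℕ :=
  ∑ e ∈ E.filter (fun e => (∃ u ∈ e, u ∈ S) ∧ ∃ u ∈ e, u ∉ S), w e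

/-- Indicator weight of edges incident to `s` (the star at `s`). -/
noncomputable def starWeight {V : Type*} (s : V) : Sym2 V → ℕ :=
  fun e => if s ∈ e then 1 else 0


lemma cutWeight_add {V : Type*} (E : Finset (Sym2 V)) (w1 w2 : Sym2 V → ℕ) (S : Finset V) :
    cutWeight E (fun e => w1 e + w2 e) S = cutWeight E w1 S + cutWeight E w2 S := by
  unfold cutWeight; exact sum_add_distrib

lemma cutWeight_smul {V : Type*} (E : Finset (Sym2 V)) (c : ℕ) (w : Sym2 V → ℕ) (S : Finset V) :
    cutWeight E (fun e => c * w e) S = c * cutWeight E w S := by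
  unfold cutWeight; exact (mul_sum _ _ _).symm

lemma cutWeight_submodular {V : Type*} [DecidableEq V] (E : Finset (Sym2 V)) (w : Sym2 V → ℕ)
    (S T : Finset V) :
    cutWeight E w (S ∪ T) + cutWeight E w (S ∩ T) ≤ cutWeight E w S + cutWeight E w T := by
  unfold cutWeight
  rw [sum_filter, sum_filter, sum_filter, sum_filter, ← sum_add_distrib, ← sum_add_distrib]
  apply sum_le_sum
  intro e _
  induction e using Sym2.ind with
  | _ u v =>
    simp only [Sym2.mem_iff, mem_union, mem_inter]
    by_cases hu : u ∈ S <;> by_cases hv : v ∈ S <;> by_cases hu' : u ∈ T <;>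
      by_cases hv' : v ∈ T <;> simp [hu, hv, hu', hv']

lemma star_cut {V : Type*} [Fintype V] [DecidableEq V] (E : Finset (Sym2 V)) (s : V)
    (hstar : ∀ v : V, v ≠ s → s(s, v) ∈ E) (S : Finset V) (hs : s ∈ S) :
    cutWeight E (starWeight s) S = (univ \ S).card := by
  unfold cutWeight starWeight
  have h1 : ∀ A : Finset (Sym2 V),
      (∑ e ∈ A, @ite ℕ (s ∈ e)
        (@Sym2.Mem.decidable V (fun a b => Classical.propDecidable (a = b)) s e) 1 0) =
      (@Finset.filter _ (fun e => s ∈ e)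
        (fun e => @Sym2.Mem.decidable V (fun a b => Classical.propDecidable (a = b)) s e) A).card :=
    fun A => (@Finset.card_filter _ (fun e => s ∈ e)
      (fun e => @Sym2.Mem.decidable V (fun a b => Classical.propDecidable (a = b)) s e) A).symm
  rw [h1]
  symm
  apply Finset.card_bij (fun v _ => s(s, v))
  · intro v hv
    simp only [mem_sdiff, mem_univ, true_and] at hv
    have hvs : v ≠ s := fun h => hv (h ▸ hs)
    simp only [mem_filter]
    refine ⟨⟨hstar v hvs, ⟨s, ?_, hs⟩, ⟨v, ?_, hv⟩⟩, ?_⟩ <;> simp [Sym2.mem_iff]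
  · intro a ha b hb h
    have := Sym2.eq_iff.mp h
    have has : a ≠ s := fun hh => (mem_sdiff.mp ha).2 (hh ▸ hs)
    tauto
  · intro e he
    simp only [mem_filter] at he
    obtain ⟨⟨heE, hcross1, hcross2⟩, hse⟩ := he
    induction e using Sym2.ind with
    | _ u v =>
      rcases Sym2.mem_iff.mp hse with h | h
      · subst h
        obtain ⟨x, hx, hxS⟩ := hcross2
        rcases Sym2.mem_iff.mp hx with rfl | rfl
        · exact absurd hs hxS
        · exact ⟨x, by simp [hxS], rfl⟩
      · subst h
        obtain ⟨x, hx, hxS⟩ := hcross2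
        rcases Sym2.mem_iff.mp hx with rfl | rfl
        · exact ⟨x, by simp [hxS], Sym2.eq_swap⟩
        · exact absurd hs hxS

lemma cut_decomp {V : Type*} [Fintype V] [DecidableEq V] (E : Finset (Sym2 V)) (s : V)
    (hstar : ∀ v : V, v ≠ s → s(s, v) ∈ E) (w : Sym2 V → ℕ) (c : ℕ)
    (T : Finset V) (hT : s ∈ T) :
    cutWeight E (fun e => c * w e + starWeight s e) T
      = c * cutWeight E w T + (univ \ T).card := by
  rw [← star_cut E s hstar T hT, ← cutWeight_smul]
  exact cutWeight_add E _ _ T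

/-- Distinct global minimum cut-sets (under star-stitched weights) containing `s`
have disjoint complements. -/
theorem min_cuts_disjoint_complements {V : Type*} [Fintype V] [DecidableEq V]
    (E : Finset (Sym2 V)) (w : Sym2 V → ℕ) (s : V)
    (hstar : ∀ v : V, v ≠ s → s(s, v) ∈ E)
    (S₁ S₂ : Finset V) (hs₁ : s ∈ S₁) (hs₂ : s ∈ S₂)
    (hne₁ : S₁.Nonempty) (hpr₁ : S₁ ≠ Finset.univ)
    (hne₂ : S₂.Nonempty) (hpr₂ : S₂ ≠ Finset.univ)
    (hmin₁ : ∀ T : Finset V, T.Nonempty → T ≠ Finset.univ →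
      cutWeight E (fun e => (Fintype.card V + 1) * w e + starWeight s e) S₁ ≤
        cutWeight E (fun e => (Fintype.card V + 1) * w e + starWeight s e) T)
    (hmin₂ : ∀ T : Finset V, T.Nonempty → T ≠ Finset.univ →
      cutWeight E (fun e => (Fintype.card V + 1) * w e + starWeight s e) S₂ ≤
        cutWeight E (fun e => (Fintype.card V + 1) * w e + starWeight s e) T)
    (hdist : S₁ ≠ S₂) :
    (Finset.univ \ S₁) ∩ (Finset.univ \ S₂) = ∅ := by
  by_contra hcon
  obtain ⟨x, hx⟩ := nonempty_iff_ne_empty.mpr hcon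
  rw [mem_inter, mem_sdiff, mem_sdiff] at hx
  obtain ⟨⟨-, hx1⟩, -, hx2⟩ := hx
  have hm12 : cutWeight E (fun e => (Fintype.card V + 1) * w e + starWeight s e) S₁ =
      cutWeight E (fun e => (Fintype.card V + 1) * w e + starWeight s e) S₂ :=
    le_antisymm (hmin₁ S₂ hne₂ hpr₂) (hmin₂ S₁ hne₁ hpr₁)
  have hUne : (S₁ ∪ S₂).Nonempty := hne₁.mono subset_union_left
  have hUpr : S₁ ∪ S₂ ≠ univ := by
    intro h
    have : x ∈ S₁ ∪ S₂ := h ▸ mem_univ x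
    rw [mem_union] at this
    tauto
  have hIne : (S₁ ∩ S₂).Nonempty := ⟨s, mem_inter.mpr ⟨hs₁, hs₂⟩⟩
  have hIpr : S₁ ∩ S₂ ≠ univ := by
    intro h
    exact hpr₁ (Finset.eq_univ_of_forall fun v => (h ▸ inter_subset_left) (mem_univ v))
  have hsub := cutWeight_submodular E
    (fun e => (Fintype.card V + 1) * w e + starWeight s e) S₁ S₂
  have h1 := hmin₁ (S₁ ∪ S₂) hUne hUpr
  have h2 := hmin₁ (S₁ ∩ S₂) hIne hIpr
  have hequU : cutWeight E (fun e => (Fintype.card V + 1) * w e + starWeight s e) (S₁ ∪ S₂) =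
      cutWeight E (fun e => (Fintype.card V + 1) * w e + starWeight s e) S₁ := by omega
  have d1 := cut_decomp E s hstar w (Fintype.card V + 1) S₁ hs₁
  have d2 := cut_decomp E s hstar w (Fintype.card V + 1) S₂ hs₂
  have dU := cut_decomp E s hstar w (Fintype.card V + 1) (S₁ ∪ S₂) (mem_union_left _ hs₁)
  have hc1 : (univ \ S₁).card < Fintype.card V + 1 := by
    have := Finset.card_le_univ (univ \ S₁)
    omega
  have hc2 : (univ \ S₂).card < Fintype.card V + 1 := by
    have := Finset.card_le_univ (univ \ S₂)
    omega
  have hcU : (univ \ (S₁ ∪ S₂)).card < Fintype.card V + 1 := by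
    have := Finset.card_le_univ (univ \ (S₁ ∪ S₂))
    omega
  have key : ∀ T : Finset V,
      cutWeight E (fun e => (Fintype.card V + 1) * w e + starWeight s e) (S₁ ∪ S₂) =
        cutWeight E (fun e => (Fintype.card V + 1) * w e + starWeight s e) T →
      (univ \ T).card < Fintype.card V + 1 →
      (cutWeight E (fun e => (Fintype.card V + 1) * w e + starWeight s e) T =
        (Fintype.card V + 1) * cutWeight E w T + (univ \ T).card) →
      (univ \ (S₁ ∪ S₂)).card = (univ \ T).card := by
    intro T hT hcT dT
    have h := hT
    rw [dU, dT] at h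
    have hmod := congrArg (fun z => z % (Fintype.card V + 1)) h
    simpa [Nat.mul_add_mod, Nat.mod_eq_of_lt hcU, Nat.mod_eq_of_lt hcT] using hmod
  have k1 : (univ \ (S₁ ∪ S₂)).card = (univ \ S₁).card := key S₁ hequU hc1 d1
  have k2 : (univ \ (S₁ ∪ S₂)).card = (univ \ S₂).card := key S₂ (hequU.trans hm12) hc2 d2
  have e1 : univ \ (S₁ ∪ S₂) = univ \ S₁ :=
    eq_of_subset_of_card_le (sdiff_subset_sdiff (Finset.Subset.refl _) subset_union_left) k1.ge
  have e2 : univ \ (S₁ ∪ S₂) = univ \ S₂ :=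
    eq_of_subset_of_card_le (sdiff_subset_sdiff (Finset.Subset.refl _) subset_union_right) k2.ge
  have e3 : univ \ S₁ = univ \ S₂ := e1 ▸ e2
  apply hdist
  have := congrArg (fun A => univ \ A) e3
  simpa [Finset.sdiff_sdiff_self_left] using this
end

section
/- Binary search case 3 (isolation): in the same setting with k ≥ 2, let t_max be the largest and t' the second-largest element of 𝒯. If t' < x ≤ t_max, then the minimizer of [w, w_s, w_s^{<x}](cut(·)) over nonempty proper subsets containing s is unique; it equals the unique S_i with t_max ∈ V∖S_i, and it satisfies w_s^{<x}(cut(S_i)) = |V∖S_i| − 1. -/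
open Finset
open scoped Classical

/-- Indicator weight of star edges `(s, v)` with `v < x`. -/
noncomputable def ltWeight {V : Type*} [LT V] (s x : V) : Sym2 V → ℕ :=
  fun e => if ∃ v : V, v < x ∧ e = Sym2.mk s v then 1 else 0

/-- `S` is a global minimum cut-set of `(V, E)` with respect to the weights `f`. -/
def IsMinCutSet {V : Type*} [Fintype V] (E : Finset (Sym2 V)) (f : Sym2 V → ℕ)
    (S : Finset V) : Prop :=
  S.Nonempty ∧ S ≠ Finset.univ ∧ ∀ T : Finset V, T.Nonempty → T ≠ Finset.univ →
    cutWeight E f S ≤ cutWeight E f T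

/-- The stitched weight `[w, w_s]` (with bound `n = |V|`). -/
noncomputable def stitch1 {V : Type*} [Fintype V] (w : Sym2 V → ℕ) (s : V) :
    Sym2 V → ℕ :=
  fun e => (Fintype.card V + 1) * w e + starWeight s e

/-- The triple-stitched weight `[w, w_s, w_s^{<x}]` (with bound `n = |V|`). -/
noncomputable def stitch2 {V : Type*} [Fintype V] [LT V] (w : Sym2 V → ℕ) (s x : V) :
    Sym2 V → ℕ :=
  fun e => (Fintype.card V + 1) * stitch1 w s e + ltWeight s x e

section Aux
set_option linter.unusedSectionVars false
variable {V : Type*} [Fintype V]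

lemma sum_indicator {α : Type*} (F : Finset α) (p : α → Prop) :
    ∑ e ∈ F, (if p e then (1 : ℕ) else 0) = (F.filter p).card := by
  rw [Finset.card_filter]

lemma cutWeight_linear (E : Finset (Sym2 V)) (a : ℕ) (f g : Sym2 V → ℕ) (S : Finset V) :
    cutWeight E (fun e => a * f e + g e) S = a * cutWeight E f S + cutWeight E g S := by
  unfold cutWeight
  rw [Finset.sum_add_distrib, Finset.mul_sum]

lemma cutWeight_compl {n : ℕ} (E : Finset (Sym2 (Fin n))) (f : Sym2 (Fin n) → ℕ)
    (S : Finset (Fin n)) :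
    cutWeight E f (Finset.univ \ S) = cutWeight E f S := by
  unfold cutWeight
  refine Finset.sum_congr ?_ fun _ _ => rfl
  ext e
  simp only [Finset.mem_filter, Finset.mem_sdiff, Finset.mem_univ, true_and]
  tauto

lemma sym2_eq_of_mem (e : Sym2 V) (s u : V) (hs : s ∈ e) (hu : u ∈ e) (hne : u ≠ s) :
    e = Sym2.mk s u := by
  induction e using Sym2.ind with
  | _ a b =>
    rw [Sym2.mem_iff] at hs hu
    rcases hs with rfl | rfl <;> rcases hu with rfl | rfl
    · exact absurd rfl hne
    · rfl
    · exact Sym2.eq_swap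
    · exact absurd rfl hne

lemma cutWeight_star {n : ℕ} (E : Finset (Sym2 (Fin n))) (s : Fin n)
    (hstar : ∀ v : Fin n, v ≠ s → Sym2.mk s v ∈ E)
    (S : Finset (Fin n)) (hs : s ∈ S) :
    cutWeight E (starWeight s) S = (Finset.univ \ S).card := by
  have key : cutWeight E (starWeight s) S
      = ((E.filter (fun e => (∃ u ∈ e, u ∈ S) ∧ ∃ u ∈ e, u ∉ S)).filter
          (fun e => s ∈ e)).card := by
    unfold cutWeight starWeight
    rw [Finset.card_filter]
    refine Finset.sum_congr ?_ fun e _ => by split <;> rfl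
    ext e
    simp only [Finset.mem_filter]
  rw [key]
  refine (Finset.card_bij (fun v _ => Sym2.mk s v) ?_ ?_ ?_).symm
  · intro v hv
    rw [Finset.mem_sdiff] at hv
    have hvs : v ≠ s := fun h => hv.2 (h ▸ hs)
    rw [Finset.mem_filter, Finset.mem_filter]
    exact ⟨⟨hstar v hvs, ⟨s, Sym2.mem_mk_left s v, hs⟩,
      ⟨v, Sym2.mem_mk_right s v, hv.2⟩⟩, Sym2.mem_mk_left s v⟩
  · intro a ha b hb hab
    exact Sym2.congr_right.mp hab
  · intro e he
    rw [Finset.mem_filter, Finset.mem_filter] at he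
    obtain ⟨⟨heE, _, ⟨u2, hu2e, hu2⟩⟩, hse⟩ := he
    have hu2s : u2 ≠ s := fun h => hu2 (h ▸ hs)
    exact ⟨u2, Finset.mem_sdiff.mpr ⟨Finset.mem_univ _, hu2⟩,
      (sym2_eq_of_mem e s u2 hse hu2e hu2s).symm⟩

lemma cutWeight_lt {n : ℕ} (E : Finset (Sym2 (Fin n))) (s x : Fin n)
    (hstar : ∀ v : Fin n, v ≠ s → Sym2.mk s v ∈ E)
    (S : Finset (Fin n)) (hs : s ∈ S) :
    cutWeight E (ltWeight s x) S = ((Finset.univ \ S).filter (· < x)).card := by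
  have key : cutWeight E (ltWeight s x) S
      = ((E.filter (fun e => (∃ u ∈ e, u ∈ S) ∧ ∃ u ∈ e, u ∉ S)).filter
          (fun e => ∃ v : Fin n, v < x ∧ e = Sym2.mk s v)).card := by
    unfold cutWeight ltWeight
    rw [Finset.card_filter]
    refine Finset.sum_congr ?_ fun e _ => by split <;> rfl
    ext e
    simp only [Finset.mem_filter]
  rw [key]
  refine (Finset.card_bij (fun v _ => Sym2.mk s v) ?_ ?_ ?_).symm
  · intro v hv
    rw [Finset.mem_filter, Finset.mem_sdiff] at hv
    obtain ⟨⟨_, hvS⟩, hvx⟩ := hv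
    have hvs : v ≠ s := fun h => hvS (h ▸ hs)
    rw [Finset.mem_filter, Finset.mem_filter]
    exact ⟨⟨hstar v hvs, ⟨s, Sym2.mem_mk_left s v, hs⟩,
      ⟨v, Sym2.mem_mk_right s v, hvS⟩⟩, ⟨v, hvx, rfl⟩⟩
  · intro a ha b hb hab
    exact Sym2.congr_right.mp hab
  · intro e he
    rw [Finset.mem_filter, Finset.mem_filter] at he
    obtain ⟨⟨heE, _, ⟨u, hue, hu⟩⟩, v, hvx, rfl⟩ := he
    rw [Sym2.mem_iff] at hue
    have huv : u = v := by
      rcases hue with rfl | rfl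
      · exact absurd hs hu
      · rfl
    subst huv
    refine ⟨u, ?_, rfl⟩
    rw [Finset.mem_filter, Finset.mem_sdiff]
    exact ⟨⟨Finset.mem_univ _, hu⟩, hvx⟩

lemma cutWeight_submod {n : ℕ} (E : Finset (Sym2 (Fin n))) (f : Sym2 (Fin n) → ℕ)
    (S T : Finset (Fin n)) :
    cutWeight E f (S ∩ T) + cutWeight E f (S ∪ T) ≤ cutWeight E f S + cutWeight E f T := by
  unfold cutWeight
  rw [Finset.sum_filter, Finset.sum_filter, Finset.sum_filter, Finset.sum_filter,
      ← Finset.sum_add_distrib, ← Finset.sum_add_distrib]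
  apply Finset.sum_le_sum
  intro e _
  induction e using Sym2.ind with
  | _ a b =>
    by_cases h1 : a ∈ S <;> by_cases h2 : b ∈ S <;> by_cases h3 : a ∈ T <;> by_cases h4 : b ∈ T <;>
      simp [Sym2.mem_iff, h1, h2, h3, h4]

lemma arith_le {K a b r r' : ℕ} (hr' : r' < K) (h : K * a + r ≤ K * b + r') : a ≤ b := by
  by_contra hab
  push_neg at hab
  have h2 : K * b + K ≤ K * a := by
    calc K * b + K = K * (b + 1) := by ring
    _ ≤ K * a := Nat.mul_le_mul_left K hab
  omega

lemma arith_eq {K a b r r' : ℕ} (hr : r < K) (hr' : r' < K)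
    (h : K * a + r = K * b + r') : a = b ∧ r = r' := by
  have h1 : a ≤ b := arith_le hr' h.le
  have h2 : b ≤ a := arith_le hr h.ge
  have hab : a = b := le_antisymm h1 h2
  subst hab
  exact ⟨rfl, Nat.add_left_cancel h⟩

lemma arith_lt {K a b r r' : ℕ} (hr : r < K) (hab : a < b) :
    K * a + r < K * b + r' := by
  have h2 : K * a + K ≤ K * b := by
    calc K * a + K = K * (a + 1) := by ring
    _ ≤ K * b := Nat.mul_le_mul_left K hab
  omega

end Aux
/-- Binary search, case 3 (isolation): with at least two global minimum cut-sets,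
if x lies strictly between the second-largest and the largest separated vertex
(inclusive on the right), the minimizer S (with s ∈ S) of the triple-stitched cut weight
is unique, excludes tmax, and satisfies w_s^{<x}(cut(S)) = |V ∖ S| - 1. -/
theorem binary_search_case_three (n : ℕ) (E : Finset (Sym2 (Fin n)))
    (w : Sym2 (Fin n) → ℕ) (s : Fin n)
    (hstar : ∀ v : Fin n, v ≠ s → Sym2.mk s v ∈ E)
    (S₁ S₂ : Finset (Fin n)) (hs₁ : s ∈ S₁) (hs₂ : s ∈ S₂)
    (hm₁ : IsMinCutSet E (stitch1 w s) S₁) (hm₂ : IsMinCutSet E (stitch1 w s) S₂)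
    (hS₁₂ : S₁ ≠ S₂)
    (tmax t' : Fin n)
    (hmax : ∃ S : Finset (Fin n), s ∈ S ∧ IsMinCutSet E (stitch1 w s) S ∧ tmax ∉ S)
    (ht' : ∃ S : Finset (Fin n), s ∈ S ∧ IsMinCutSet E (stitch1 w s) S ∧ t' ∉ S)
    (hlt : t' < tmax)
    (hmaxmax : ∀ u : Fin n,
      (∃ S : Finset (Fin n), s ∈ S ∧ IsMinCutSet E (stitch1 w s) S ∧ u ∉ S) → u ≤ tmax)
    (hsecond : ∀ u : Fin n,
      (∃ S : Finset (Fin n), s ∈ S ∧ IsMinCutSet E (stitch1 w s) S ∧ u ∉ S) →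
        u ≠ tmax → u ≤ t')
    (x : Fin n) (hx₁ : t' < x) (hx₂ : x ≤ tmax) :
    (∃! S : Finset (Fin n), s ∈ S ∧ IsMinCutSet E (stitch2 w s x) S) ∧
      ∀ S : Finset (Fin n), s ∈ S → IsMinCutSet E (stitch2 w s x) S →
        tmax ∉ S ∧ cutWeight E (ltWeight s x) S + 1 = (Finset.univ \ S).card := by
  classical
  -- unfolded weight formulas
  have e1 : stitch1 w s = fun e => (n + 1) * w e + starWeight s e := by
    funext e; simp [stitch1, Fintype.card_fin]
  have e2 : stitch2 w s x = fun e => (n + 1) * stitch1 w s e + ltWeight s x e := by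
    funext e; simp [stitch2, Fintype.card_fin]
  have form1 : ∀ S : Finset (Fin n), s ∈ S →
      cutWeight E (stitch1 w s) S = (n + 1) * cutWeight E w S + (univ \ S).card := by
    intro S hsS
    rw [e1, cutWeight_linear, cutWeight_star E s hstar S hsS]
  have form2 : ∀ S : Finset (Fin n), s ∈ S →
      cutWeight E (stitch2 w s x) S
        = (n + 1) * cutWeight E (stitch1 w s) S + ((univ \ S).filter (· < x)).card := by
    intro S hsS
    rw [e2, cutWeight_linear, cutWeight_lt E s x hstar S hsS]
  have bound : ∀ S : Finset (Fin n), (univ \ S).card < n + 1 := by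
    intro S
    have := Finset.card_le_card (Finset.sdiff_subset (s := (univ : Finset (Fin n))) (t := S))
    simp only [Finset.card_univ, Fintype.card_fin] at this
    omega
  have boundlt : ∀ S : Finset (Fin n), ((univ \ S).filter (· < x)).card < n + 1 := by
    intro S
    have h1 := Finset.card_le_card (Finset.filter_subset (· < x) (univ \ S))
    have h2 := bound S
    omega
  set m := cutWeight E (stitch1 w s) S₁ with hm
  have hminm : ∀ T : Finset (Fin n), T.Nonempty → T ≠ univ →
      m ≤ cutWeight E (stitch1 w s) T := hm₁.2.2
  have hvalm : ∀ S : Finset (Fin n), IsMinCutSet E (stitch1 w s) S →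
      cutWeight E (stitch1 w s) S = m :=
    fun S hS => le_antisymm (hS.2.2 S₁ hm₁.1 hm₁.2.1) (hminm S hS.1 hS.2.1)
  set c := (univ \ S₁).card with hc
  have hcn : c < n + 1 := bound S₁
  have hsame : ∀ S : Finset (Fin n), s ∈ S → IsMinCutSet E (stitch1 w s) S →
      (univ \ S).card = c := by
    intro S hsS hS
    have h1 := hvalm S hS
    rw [form1 S hsS, hm, form1 S₁ hs₁] at h1
    exact (arith_eq (bound S) (bound S₁) h1).2
  obtain ⟨S₀, hsS₀, hS₀, htm₀⟩ := hmax
  have htm₀' : tmax ∈ univ \ S₀ := Finset.mem_sdiff.mpr ⟨Finset.mem_univ _, htm₀⟩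
  have hc0 : (univ \ S₀).card = c := hsame S₀ hsS₀ hS₀
  have hc1 : 1 ≤ c := by
    rw [← hc0]
    exact Finset.card_pos.mpr ⟨tmax, htm₀'⟩
  have hfilter : ∀ T : Finset (Fin n), s ∈ T → IsMinCutSet E (stitch1 w s) T →
      (univ \ T).filter (· < x) = (univ \ T).erase tmax := by
    intro T hsT hT
    ext u
    simp only [Finset.mem_filter, Finset.mem_erase, Finset.mem_sdiff, Finset.mem_univ, true_and]
    constructor
    · rintro ⟨hu, hux⟩
      refine ⟨fun h => ?_, hu⟩
      subst h
      exact absurd hux (not_lt.mpr hx₂)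
    · rintro ⟨hne, hu⟩
      exact ⟨hu, lt_of_le_of_lt (hsecond u ⟨T, hsT, hT, hu⟩ hne) hx₁⟩
  have hlt0 : ((univ \ S₀).filter (· < x)).card = c - 1 := by
    rw [hfilter S₀ hsS₀ hS₀, Finset.card_erase_of_mem htm₀', hc0]
  have hltge : ∀ T : Finset (Fin n), s ∈ T → IsMinCutSet E (stitch1 w s) T →
      c - 1 ≤ ((univ \ T).filter (· < x)).card := by
    intro T hsT hT
    rw [hfilter T hsT hT]
    by_cases htm : tmax ∈ univ \ T
    · rw [Finset.card_erase_of_mem htm, hsame T hsT hT]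
    · rw [Finset.erase_eq_of_notMem htm, hsame T hsT hT]
      omega
  have htmout : ∀ S : Finset (Fin n), s ∈ S → IsMinCutSet E (stitch1 w s) S →
      ((univ \ S).filter (· < x)).card = c - 1 → tmax ∉ S := by
    intro S hsS hS hcard htmS
    have htm : tmax ∉ univ \ S := fun h => (Finset.mem_sdiff.mp h).2 htmS
    rw [hfilter S hsS hS, Finset.erase_eq_of_notMem htm, hsame S hsS hS] at hcard
    omega
  -- minimality of S₀ for stitch2
  have hS₀m : cutWeight E (stitch1 w s) S₀ = m := hvalm S₀ hS₀
  have K1 : IsMinCutSet E (stitch2 w s x) S₀ := by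
    refine ⟨⟨s, hsS₀⟩, hS₀.2.1, fun T hTne hTu => ?_⟩
    -- reduce to the case s ∈ T
    suffices H : ∀ T : Finset (Fin n), s ∈ T → T ≠ univ →
        cutWeight E (stitch2 w s x) S₀ ≤ cutWeight E (stitch2 w s x) T by
      by_cases hsT : s ∈ T
      · exact H T hsT hTu
      · have h1 : univ \ T ≠ univ := by
          obtain ⟨t, ht⟩ := hTne
          intro hcon
          have : t ∈ univ \ T := by rw [hcon]; exact Finset.mem_univ t
          exact (Finset.mem_sdiff.mp this).2 ht
        have h2 : s ∈ univ \ T := Finset.mem_sdiff.mpr ⟨Finset.mem_univ s, hsT⟩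
        calc cutWeight E (stitch2 w s x) S₀ ≤ cutWeight E (stitch2 w s x) (univ \ T) :=
              H (univ \ T) h2 h1
          _ = cutWeight E (stitch2 w s x) T := cutWeight_compl E (stitch2 w s x) T
    intro T hsT hTu
    rw [form2 S₀ hsS₀, form2 T hsT, hS₀m, hlt0]
    have hmT : m ≤ cutWeight E (stitch1 w s) T := hminm T ⟨s, hsT⟩ hTu
    rcases eq_or_lt_of_le hmT with heq | hlt2
    · have hTmin : IsMinCutSet E (stitch1 w s) T := ⟨⟨s, hsT⟩, hTu, fun R r1 r2 => by
        rw [← heq]; exact hminm R r1 r2⟩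
      rw [← heq]
      exact Nat.add_le_add_left (hltge T hsT hTmin) _
    · exact le_of_lt (arith_lt (by omega) hlt2)
  -- characterization of stitch2 minimizers containing s
  have hchar : ∀ S : Finset (Fin n), s ∈ S → IsMinCutSet E (stitch2 w s x) S →
      IsMinCutSet E (stitch1 w s) S ∧ tmax ∉ S ∧
        ((univ \ S).filter (· < x)).card = c - 1 := by
    intro S hsS hS2
    have hle : cutWeight E (stitch2 w s x) S = cutWeight E (stitch2 w s x) S₀ :=
      le_antisymm (hS2.2.2 S₀ K1.1 K1.2.1) (K1.2.2 S hS2.1 hS2.2.1)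
    rw [form2 S hsS, form2 S₀ hsS₀, hS₀m, hlt0] at hle
    obtain ⟨h1, h2⟩ := arith_eq (boundlt S) (by omega) hle
    have hSmin : IsMinCutSet E (stitch1 w s) S := ⟨⟨s, hsS⟩, hS2.2.1, fun R r1 r2 => by
      rw [h1]; exact hminm R r1 r2⟩
    exact ⟨hSmin, htmout S hsS hSmin h2, h2⟩
  -- uniqueness among stitch1 minimizers avoiding tmax
  have huniq : ∀ A B : Finset (Fin n), s ∈ A → s ∈ B →
      IsMinCutSet E (stitch1 w s) A → IsMinCutSet E (stitch1 w s) B →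
      tmax ∉ A → tmax ∉ B → A = B := by
    intro A B hsA hsB hA hB htA htB
    have hU : A ∪ B ≠ univ := by
      intro hcon
      have : tmax ∈ A ∪ B := by rw [hcon]; exact Finset.mem_univ tmax
      rcases Finset.mem_union.mp this with h | h
      · exact htA h
      · exact htB h
    have hUne : (A ∪ B).Nonempty := ⟨s, Finset.mem_union_left _ hsA⟩
    have hIne : (A ∩ B).Nonempty := ⟨s, Finset.mem_inter.mpr ⟨hsA, hsB⟩⟩
    have hInu : A ∩ B ≠ univ := by
      intro hcon
      apply hA.2.1
      have h := Finset.inter_subset_left (s₁ := A) (s₂ := B)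
      rw [hcon] at h
      exact Finset.univ_subset_iff.mp h
    have h1 : m ≤ cutWeight E (stitch1 w s) (A ∩ B) := hminm _ hIne hInu
    have h2 : m ≤ cutWeight E (stitch1 w s) (A ∪ B) := hminm _ hUne hU
    have hAm := hvalm A hA
    have hBm := hvalm B hB
    have hsub := cutWeight_submod E (stitch1 w s) A B
    have hUm : cutWeight E (stitch1 w s) (A ∪ B) = m := by omega
    have hUmin : IsMinCutSet E (stitch1 w s) (A ∪ B) := ⟨hUne, hU, fun R r1 r2 => by
      rw [hUm]; exact hminm R r1 r2⟩
    have hcA := hsame A hsA hA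
    have hcB := hsame B hsB hB
    have hcU := hsame (A ∪ B) (Finset.mem_union_left _ hsA) hUmin
    have hsubA : univ \ (A ∪ B) ⊆ univ \ A :=
      Finset.sdiff_subset_sdiff (Finset.Subset.refl _) Finset.subset_union_left
    have hsubB : univ \ (A ∪ B) ⊆ univ \ B :=
      Finset.sdiff_subset_sdiff (Finset.Subset.refl _) Finset.subset_union_right
    have heqA : univ \ (A ∪ B) = univ \ A :=
      Finset.eq_of_subset_of_card_le hsubA (by rw [hcA, hcU])
    have heqB : univ \ (A ∪ B) = univ \ B :=
      Finset.eq_of_subset_of_card_le hsubB (by rw [hcB, hcU])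
    have heq : univ \ A = univ \ B := heqA ▸ heqB
    have : univ \ (univ \ A) = univ \ (univ \ B) := by rw [heq]
    rwa [Finset.sdiff_sdiff_self_left, Finset.sdiff_sdiff_self_left,
      Finset.univ_inter, Finset.univ_inter] at this
  constructor
  · refine ⟨S₀, ⟨hsS₀, K1⟩, fun y hy => ?_⟩
    obtain ⟨hys, hymin⟩ := hy
    obtain ⟨hy1, hy2, _⟩ := hchar y hys hymin
    exact huniq y S₀ hys hsS₀ hy1 hS₀ hy2 htm₀
  · intro S hsS hSmin
    obtain ⟨hS1, htmS, hcardS⟩ := hchar S hsS hSmin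
    refine ⟨htmS, ?_⟩
    rw [cutWeight_lt E s x hstar S hsS, hcardS, hsame S hsS hS1]
    omega
end
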